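/- arXiv:2308.12365 — 4 statements merged into one kernel-verified Lean document; each statement's English description precedes it below -/
import Mathlib

section
/- Every locally finite open cover U of a normal topological space X has an open star-refinement W: an open cover W such that for every W₀ ∈ W there exists U₀ ∈ U with St(W₀, W) ⊆ U₀, where St(A, W) denotes the union of all members of W intersecting A. -/
theorem exists_open_star_refinement {X : Type*} [TopologicalSpace X] [NormalSpace X]
    {κ : Type*} (U : κ → Set X) (hopen : ∀ a, IsOpen (U a))
    (hlf : LocallyFinite U) (hcov : ⋃ a, U a = Set.univ) :
    ∃ 𝒲 : Set (Set X), (∀ W ∈ 𝒲, IsOpen W) ∧ ⋃₀ 𝒲 = Set.univ ∧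
      ∀ W₀ ∈ 𝒲, ∃ a, ⋃₀ {W' ∈ 𝒲 | (W' ∩ W₀).Nonempty} ⊆ U a := by
  obtain ⟨V, hVcov, hVopen, hVcl⟩ :=
    exists_iUnion_eq_closure_subset (fun a => hopen a) (fun x => hlf.point_finite x) hcov
  have hVlf : LocallyFinite V := hlf.subset fun a => (subset_closure.trans (hVcl a))
  have hVclf : LocallyFinite fun a => closure (V a) := hVlf.closure
  -- index set
  set I : X → Set κ := fun x => {a | x ∈ closure (V a)} with hI
  have hIfin : ∀ x, (I x).Finite := fun x => hVclf.point_finite x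
  -- choice of covering index
  have hax : ∀ x : X, ∃ a, x ∈ V a := by
    intro x
    have : x ∈ ⋃ a, V a := hVcov ▸ Set.mem_univ x
    simpa using this
  choose ax hax using hax
  -- the bad closed set
  set C : X → Set X := fun x => ⋃ a ∈ {a | a ∉ I x}, closure (V a) with hC
  have hCclosed : ∀ x, IsClosed (C x) := by
    intro x
    simp only [hC, Set.biUnion_eq_iUnion]
    exact LocallyFinite.isClosed_iUnion (hVclf.comp_injective Subtype.val_injective)
      (fun a => isClosed_closure)
  have hxC : ∀ x, x ∉ C x := by
    intro x hx
    simp only [hC, Set.mem_iUnion] at hx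
    obtain ⟨a, ha, hxa⟩ := hx
    exact ha hxa
  -- the star sets
  set W : X → Set X := fun x => V (ax x) ∩ (⋂ a ∈ I x, U a) ∩ (C x)ᶜ with hW
  have hWopen : ∀ x, IsOpen (W x) := by
    intro x
    refine (((hVopen _).inter ?_).inter (hCclosed x).isOpen_compl)
    exact (hIfin x).isOpen_biInter fun a _ => hopen a
  have hxW : ∀ x, x ∈ W x := by
    intro x
    refine ⟨⟨hax x, ?_⟩, hxC x⟩
    exact Set.mem_biInter fun a ha => hVcl a ha
  -- key lemma
  have key : ∀ x y : X, (W y ∩ W x).Nonempty → W y ⊆ U (ax x) := by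
    intro x y ⟨z, hzy, hzx⟩
    have haxI : ax x ∈ I y := by
      by_contra h
      have : z ∈ C y := Set.mem_biUnion h (subset_closure hzx.1.1)
      exact hzy.2 this
    intro w hw
    exact Set.mem_iInter₂.mp hw.1.2 (ax x) haxI
  refine ⟨Set.range W, ?_, ?_, ?_⟩
  · rintro _ ⟨x, rfl⟩; exact hWopen x
  · apply Set.eq_univ_of_forall
    intro x
    exact ⟨W x, ⟨x, rfl⟩, hxW x⟩
  · rintro _ ⟨x, rfl⟩
    refine ⟨ax x, ?_⟩
    rintro w ⟨W', ⟨⟨y, rfl⟩, hne⟩, hw⟩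
    exact key x y hne hw
end

section
/- Let X be a topological space, B ⊆ X closed, U ⊆ B relatively open, and c : closure(U) × [0,1] → X a local collar of B (an embedding with c(x,0)=x for all x, c⁻¹(B) = closure(U) × {0}, and c(U × [0,1)) open in X). If g : closure(U) → (0,1] is continuous, then the map h(x,t) := c(x, t·g(x)) is also a local collar of B in X; moreover if c is a closed embedding, so is h. -/
/-- `c` is a local collar of the closed set `B` in `X`, with base `closure U`,
where `U` is relatively open in `B`. -/
def IsLocalCollar {X : Type*} [TopologicalSpace X] (B U : Set X) (c : X → ℝ → X) : Prop :=
  U ⊆ B ∧ IsOpen ((↑) ⁻¹' U : Set B) ∧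
  Topology.IsEmbedding (fun p : ↥(closure U) × ↥(Set.Icc (0:ℝ) 1) => c p.1.1 p.2.1) ∧
  (∀ x ∈ closure U, c x 0 = x) ∧
  (∀ x ∈ closure U, ∀ t ∈ Set.Icc (0:ℝ) 1, c x t ∈ B → t = 0) ∧
  IsOpen {y : X | ∃ x ∈ U, ∃ t ∈ Set.Ico (0:ℝ) 1, y = c x t}

/-- Image of the full domain `closure U × [0,1]` of a local collar. -/
def collarImage {X : Type*} [TopologicalSpace X] (U : Set X) (c : X → ℝ → X) : Set X :=
  {y | ∃ x ∈ closure U, ∃ t ∈ Set.Icc (0:ℝ) 1, y = c x t}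

theorem localCollar_continuous_cut {X : Type*} [TopologicalSpace X]
    (B U : Set X) (hB : IsClosed B) (c : X → ℝ → X) (hc : IsLocalCollar B U c)
    (g : X → ℝ) (hg : ContinuousOn g (closure U))
    (hg1 : ∀ x ∈ closure U, g x ∈ Set.Ioc (0:ℝ) 1) :
    IsLocalCollar B U (fun x t => c x (t * g x)) ∧
      (IsClosed (collarImage U c) →
        IsClosed (collarImage U (fun x t => c x (t * g x)))) := by
  obtain ⟨hUB, hUopen, hemb, hc0, hcB, hcopen⟩ := hc
  set D := ↥(closure U) × ↥(Set.Icc (0:ℝ) 1)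
  set e : D → X := fun p => c p.1.1 p.2.1 with he
  have hgc : Continuous (fun x : ↥(closure U) => g x.1) := hg.restrict
  have hgpos : ∀ x : ↥(closure U), 0 < g x.1 := fun x => (hg1 x.1 x.2).1
  have hgle : ∀ x : ↥(closure U), g x.1 ≤ 1 := fun x => (hg1 x.1 x.2).2
  have hmem : ∀ p : D, p.2.1 * g p.1.1 ∈ Set.Icc (0:ℝ) 1 := by
    intro p
    constructor
    · exact mul_nonneg p.2.2.1 (hgpos p.1).le
    · exact mul_le_one₀ p.2.2.2 (hgpos p.1).le (hgle p.1)
  set φ : D → D := fun p => (p.1, ⟨p.2.1 * g p.1.1, hmem p⟩) with hφdef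
  have hφcont : Continuous φ := by
    refine continuous_fst.prodMk (Continuous.subtype_mk ?_ _)
    exact (continuous_subtype_val.comp continuous_snd).mul (hgc.comp continuous_fst)
  have hφemb : Topology.IsEmbedding φ := by
    set ψ : D → ↥(closure U) × ℝ := fun p => (p.1, p.2.1 / g p.1.1) with hψdef
    have hψcont : Continuous ψ := by
      refine continuous_fst.prodMk ?_
      exact (continuous_subtype_val.comp continuous_snd).div (hgc.comp continuous_fst)
        (fun p => (hgpos p.1).ne')
    have hcomp : ψ ∘ φ = fun p : D => (p.1, p.2.1) := by
      funext p
      simp only [hψdef, hφdef, Function.comp_apply]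
      rw [mul_div_cancel_right₀ _ (hgpos p.1).ne']
    have hembc : Topology.IsEmbedding (ψ ∘ φ) := by
      rw [hcomp]
      exact Topology.IsEmbedding.id.prodMap Topology.IsEmbedding.subtypeVal
    exact Topology.IsEmbedding.of_comp hφcont hψcont hembc
  have hembh : Topology.IsEmbedding
      (fun p : D => c p.1.1 (p.2.1 * g p.1.1)) := hemb.comp hφemb
  -- the open-image condition
  have hVopen : IsOpen {p : D | p.2.1 < g p.1.1} :=
    isOpen_lt (continuous_subtype_val.comp continuous_snd) (hgc.comp continuous_fst)
  obtain ⟨O, hO, hOe⟩ := hemb.toIsInducing.isOpen_iff.mp hVopen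
  have hseteq : {y : X | ∃ x ∈ U, ∃ t ∈ Set.Ico (0:ℝ) 1, y = c x (t * g x)}
      = O ∩ {y : X | ∃ x ∈ U, ∃ t ∈ Set.Ico (0:ℝ) 1, y = c x t} := by
    ext y
    constructor
    · rintro ⟨x, hx, t, ht, rfl⟩
      have hxcl : x ∈ closure U := subset_closure hx
      have hgp : 0 < g x := hgpos ⟨x, hxcl⟩
      have hsg : t * g x < g x := by
        calc t * g x < 1 * g x := by exact mul_lt_mul_of_pos_right ht.2 hgp
        _ = g x := one_mul _
      have hs1 : t * g x < 1 := lt_of_lt_of_le hsg (hgle ⟨x, hxcl⟩)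
      have hs0 : 0 ≤ t * g x := mul_nonneg ht.1 hgp.le
      refine ⟨?_, x, hx, t * g x, ⟨hs0, hs1⟩, rfl⟩
      have hp : (⟨⟨x, hxcl⟩, ⟨t * g x, hs0, hs1.le⟩⟩ : D) ∈ e ⁻¹' O := by
        rw [hOe]; exact hsg
      exact hp
    · rintro ⟨hyO, x, hx, t, ht, rfl⟩
      have hxcl : x ∈ closure U := subset_closure hx
      have hgp : 0 < g x := hgpos ⟨x, hxcl⟩
      have hp : (⟨⟨x, hxcl⟩, ⟨t, ht.1, ht.2.le⟩⟩ : D) ∈ e ⁻¹' O := hyO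
      rw [hOe] at hp
      have htlt : t < g x := hp
      refine ⟨x, hx, t / g x, ⟨div_nonneg ht.1 hgp.le, (div_lt_one hgp).mpr htlt⟩, ?_⟩
      rw [div_mul_cancel₀ _ hgp.ne']
  constructor
  · refine ⟨hUB, hUopen, hembh, ?_, ?_, ?_⟩
    · intro x hx
      simp only [zero_mul]
      exact hc0 x hx
    · intro x hx t ht hBm
      have hxcl : x ∈ closure U := hx
      have hgp : 0 < g x := hgpos ⟨x, hxcl⟩
      have h0 : t * g x = 0 :=
        hcB x hx _ (hmem ⟨⟨x, hxcl⟩, ⟨t, ht⟩⟩) hBm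
      rcases mul_eq_zero.mp h0 with h | h
      · exact h
      · exact absurd h hgp.ne'
    · have : {y : X | ∃ x ∈ U, ∃ t ∈ Set.Ico (0:ℝ) 1, y = (fun x t => c x (t * g x)) x t}
          = O ∩ {y : X | ∃ x ∈ U, ∃ t ∈ Set.Ico (0:ℝ) 1, y = c x t} := hseteq
      rw [this]
      exact hO.inter hcopen
  · intro hcl
    have hrange : Set.range e = collarImage U c := by
      ext y
      constructor
      · rintro ⟨p, rfl⟩
        exact ⟨p.1.1, p.1.2, p.2.1, p.2.2, rfl⟩
      · rintro ⟨x, hx, t, ht, rfl⟩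
        exact ⟨⟨⟨x, hx⟩, ⟨t, ht⟩⟩, rfl⟩
    have hce : Topology.IsClosedEmbedding e := ⟨hemb, by rw [hrange]; exact hcl⟩
    have hK : IsClosed {p : D | p.2.1 ≤ g p.1.1} :=
      isClosed_le (continuous_subtype_val.comp continuous_snd) (hgc.comp continuous_fst)
    have himg : collarImage U (fun x t => c x (t * g x)) = e '' {p : D | p.2.1 ≤ g p.1.1} := by
      ext y
      constructor
      · rintro ⟨x, hx, t, ht, rfl⟩
        have hgp : 0 < g x := hgpos ⟨x, hx⟩
        refine ⟨⟨⟨x, hx⟩, ⟨t * g x, hmem ⟨⟨x, hx⟩, ⟨t, ht⟩⟩⟩⟩, ?_, rfl⟩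
        show t * g x ≤ g x
        calc t * g x ≤ 1 * g x := mul_le_mul_of_nonneg_right ht.2 hgp.le
        _ = g x := one_mul _
      · rintro ⟨⟨x, s⟩, hps, rfl⟩
        have hgp : 0 < g x.1 := hgpos x
        have hsle : s.1 ≤ g x.1 := hps
        refine ⟨x.1, x.2, s.1 / g x.1,
          ⟨div_nonneg s.2.1 hgp.le, (div_le_one hgp).mpr hsle⟩, ?_⟩
        show e (x, s) = c x.1 (s.1 / g x.1 * g x.1)
        rw [div_mul_cancel₀ _ hgp.ne']
    rw [himg]
    exact hce.isClosedMap _ hK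
end

section
/- Let X be a topological space, B ⊆ X a closed subspace that is paracompact and Hausdorff in the subspace topology, and A ⊆ X a closed set with A ∩ B = ∅. If c : B × [0,1] → X is a collar of B in X, then there exists a continuous function d : B → (0,1] such that c(x,t) ∉ A for all x ∈ B and all t ∈ [0, d(x)]. -/
open Set Topology

theorem collar_cut_avoiding_closed_set {X : Type*} [TopologicalSpace X]
    (B A : Set X) (hB : IsClosed B) [ParacompactSpace B] [T2Space B]
    (hA : IsClosed A) (hAB : A ∩ B = ∅)
    (c : X → ℝ → X) (hc : IsLocalCollar B B c) :
    ∃ d : X → ℝ, ContinuousOn d B ∧ (∀ x ∈ B, d x ∈ Set.Ioc (0:ℝ) 1) ∧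
      ∀ x ∈ B, ∀ t ∈ Set.Icc (0:ℝ) (d x), c x t ∉ A := by
  classical
  obtain ⟨-, -, hemb, hc0, -, -⟩ := hc
  have hcl : closure B = B := hB.closure_eq
  rw [hcl] at hemb hc0
  -- the continuous map g : B × Icc 0 1 → X
  set g : B × (Set.Icc (0:ℝ) 1) → X := fun p => c p.1.1 p.2.1 with hg
  have hgc : Continuous g := hemb.continuous
  -- family of convex sets
  set t : B → Set ℝ := fun x => {r | r ∈ Set.Ioc (0:ℝ) 1 ∧ ∀ s ∈ Set.Icc (0:ℝ) r, c x.1 s ∉ A}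
    with ht
  have hconv : ∀ x : B, Convex ℝ (t x) := by
    intro x
    rw [convex_iff_ordConnected]
    constructor
    rintro a ⟨⟨ha0, ha1⟩, _⟩ b ⟨⟨_, hb1⟩, hbP⟩ r ⟨har, hrb⟩
    exact ⟨⟨lt_of_lt_of_le ha0 har, le_trans hrb hb1⟩,
      fun s hs => hbP s ⟨hs.1, hs.2.trans hrb⟩⟩
  have H : ∀ x : B, ∃ r : ℝ, ∀ᶠ y in nhds x, r ∈ t y := by
    intro x
    have hx0 : g (x, ⟨0, by norm_num⟩) ∉ A := by
      simp only [hg]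
      rw [hc0 x.1 x.2]
      intro h
      exact absurd (Set.mem_inter h x.2) (by rw [hAB]; exact notMem_empty _)
    have hW : IsOpen (g ⁻¹' Aᶜ) := hA.isOpen_compl.preimage hgc
    have hmem : g ⁻¹' Aᶜ ∈ nhds (x, (⟨0, by norm_num⟩ : Set.Icc (0:ℝ) 1)) :=
      hW.mem_nhds hx0
    rw [mem_nhds_prod_iff] at hmem
    obtain ⟨U, hU, V, hV, hUV⟩ := hmem
    rw [nhds_subtype, Filter.mem_comap] at hV
    obtain ⟨S, hS, hSV⟩ := hV
    obtain ⟨ε, hε, hball⟩ := Metric.mem_nhds_iff.1 hS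
    refine ⟨min (ε/2) 1, ?_⟩
    filter_upwards [hU] with y hy
    refine ⟨⟨lt_min (by linarith) one_pos, min_le_right _ _⟩, fun s hs hsA => ?_⟩
    have hs1 : s ∈ Set.Icc (0:ℝ) 1 := ⟨hs.1, hs.2.trans (min_le_right _ _)⟩
    have hsb : (⟨s, hs1⟩ : Set.Icc (0:ℝ) 1) ∈ V := by
      apply hSV
      apply hball
      simp only [Metric.mem_ball, Real.dist_eq, sub_zero, abs_of_nonneg hs.1]
      exact lt_of_le_of_lt (hs.2.trans (min_le_left _ _)) (by linarith)
    exact hUV (Set.mk_mem_prod hy hsb) hsA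
  obtain ⟨f, hf⟩ := exists_continuous_forall_mem_convex_of_local_const hconv H
  refine ⟨fun x => if h : x ∈ B then f ⟨x, h⟩ else 1, ?_, ?_, ?_⟩
  · rw [continuousOn_iff_continuous_restrict]
    have : (Set.domRestrict B fun x => if h : x ∈ B then f ⟨x, h⟩ else 1) = fun y : B => f y := by
      ext y; exact dif_pos y.2
    rw [this]; exact f.continuous
  · intro x hx; simp only [dif_pos hx]; exact (hf ⟨x, hx⟩).1
  · intro x hx s hs
    simp only [dif_pos hx] at hs
    exact (hf ⟨x, hx⟩).2 s hs
end

section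
/- Let X be a metric space, B ⊆ X closed, and c : B × [−1,1] → X a bicollar whose restrictions c⁻ to B × [−1,0] and c⁺ to B × [0,1] are bi-Lipschitz onto their images with inverse-Lipschitz constants iL(c⁻) and iL(c⁺). Suppose there is α ≥ 1 such that for all x,y ∈ B, s ∈ [−1,0], t ∈ [0,1] there exists z ∈ B with dist(c(x,s), z) + dist(z, c(y,t)) ≤ α·dist(c(x,s), c(y,t)). Then c is bi-Lipschitz onto its image with inverse-Lipschitz constant at most α·max(iL(c⁻), iL(c⁺)). -/
theorem bicollar_biLipschitz_of_midpoint_condition {X : Type*} [MetricSpace X]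
    (B : Set X) (hB : IsClosed B) (c : X → ℝ → X)
    (hemb : Topology.IsEmbedding (fun p : ↥B × ↥(Set.Icc (-1:ℝ) 1) => c p.1.1 p.2.1))
    (h0 : ∀ x ∈ B, c x 0 = x)
    (hopen : IsOpen {y : X | ∃ x ∈ B, ∃ t ∈ Set.Ioo (-1:ℝ) 1, y = c x t})
    (Lm Lp iLm iLp : ℝ)
    -- the two restrictions are bi-Lipschitz onto their images:
    (hLm : ∀ x ∈ B, ∀ y ∈ B, ∀ s ∈ Set.Icc (-1:ℝ) 0, ∀ t ∈ Set.Icc (-1:ℝ) 0,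
      dist (c x s) (c y t) ≤ Lm * (dist x y + |s - t|))
    (hLp : ∀ x ∈ B, ∀ y ∈ B, ∀ s ∈ Set.Icc (0:ℝ) 1, ∀ t ∈ Set.Icc (0:ℝ) 1,
      dist (c x s) (c y t) ≤ Lp * (dist x y + |s - t|))
    (hiLm : ∀ x ∈ B, ∀ y ∈ B, ∀ s ∈ Set.Icc (-1:ℝ) 0, ∀ t ∈ Set.Icc (-1:ℝ) 0,
      dist x y + |s - t| ≤ iLm * dist (c x s) (c y t))
    (hiLp : ∀ x ∈ B, ∀ y ∈ B, ∀ s ∈ Set.Icc (0:ℝ) 1, ∀ t ∈ Set.Icc (0:ℝ) 1,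
      dist x y + |s - t| ≤ iLp * dist (c x s) (c y t))
    (α : ℝ) (hα : 1 ≤ α)
    (hmid : ∀ x ∈ B, ∀ y ∈ B, ∀ s ∈ Set.Icc (-1:ℝ) 0, ∀ t ∈ Set.Icc (0:ℝ) 1,
      ∃ z ∈ B, dist (c x s) z + dist z (c y t) ≤ α * dist (c x s) (c y t)) :
    (∃ K : ℝ, ∀ x ∈ B, ∀ y ∈ B, ∀ s ∈ Set.Icc (-1:ℝ) 1, ∀ t ∈ Set.Icc (-1:ℝ) 1,
      dist (c x s) (c y t) ≤ K * (dist x y + |s - t|)) ∧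
    ∀ x ∈ B, ∀ y ∈ B, ∀ s ∈ Set.Icc (-1:ℝ) 1, ∀ t ∈ Set.Icc (-1:ℝ) 1,
      dist x y + |s - t| ≤ α * max iLm iLp * dist (c x s) (c y t) := by

  have h00 : (0:ℝ) ∈ Set.Icc (-1:ℝ) 0 := by norm_num
  have h00' : (0:ℝ) ∈ Set.Icc (0:ℝ) 1 := by norm_num
  constructor
  · refine ⟨max Lm Lp, ?_⟩
    intro x hx y hy s hs t ht
    have key : ∀ x ∈ B, ∀ y ∈ B, ∀ s ∈ Set.Icc (-1:ℝ) 0, ∀ t ∈ Set.Icc (0:ℝ) 1,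
        dist (c x s) (c y t) ≤ max Lm Lp * (dist x y + |s - t|) := by
      intro x hx y hy s hs t ht
      have h1 : dist (c x s) (c x 0) ≤ Lm * (dist x x + |s - 0|) :=
        hLm x hx x hx s hs 0 h00
      have h2 : dist (c x 0) (c y t) ≤ Lp * (dist x y + |0 - t|) :=
        hLp x hx y hy 0 h00' t ht
      have htri := dist_triangle (c x s) (c x 0) (c y t)
      have habs : |s - t| = |s - 0| + |0 - t| := by
        rw [abs_of_nonpos (by linarith [hs.2, ht.1] : s - t ≤ 0),
          abs_of_nonpos (by linarith [hs.2] : s - 0 ≤ 0),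
          abs_of_nonpos (by linarith [ht.1] : 0 - t ≤ 0)]
        ring
      have hm1 : Lm * (dist x x + |s - 0|) ≤ max Lm Lp * (dist x x + |s - 0|) :=
        mul_le_mul_of_nonneg_right (le_max_left _ _)
          (by positivity)
      have hm2 : Lp * (dist x y + |0 - t|) ≤ max Lm Lp * (dist x y + |0 - t|) :=
        mul_le_mul_of_nonneg_right (le_max_right _ _) (by positivity)
      have hdxx : dist x x = 0 := dist_self x
      have heq : (Lm ⊔ Lp) * (dist x x + |s - 0|) + (Lm ⊔ Lp) * (dist x y + |0 - t|)
          = (Lm ⊔ Lp) * (dist x y + |s - t|) := by rw [hdxx, habs]; ring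
      linarith
    rcases le_or_gt s 0 with hs0 | hs0 <;> rcases le_or_gt t 0 with ht0 | ht0
    · calc dist (c x s) (c y t) ≤ Lm * (dist x y + |s - t|) :=
            hLm x hx y hy s ⟨hs.1, hs0⟩ t ⟨ht.1, ht0⟩
        _ ≤ max Lm Lp * (dist x y + |s - t|) :=
            mul_le_mul_of_nonneg_right (le_max_left _ _) (by positivity)
    · exact key x hx y hy s ⟨hs.1, hs0⟩ t ⟨ht0.le, ht.2⟩
    · rw [dist_comm, dist_comm x y, abs_sub_comm]
      exact key y hy x hx t ⟨ht.1, ht0⟩ s ⟨hs0.le, hs.2⟩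
    · calc dist (c x s) (c y t) ≤ Lp * (dist x y + |s - t|) :=
            hLp x hx y hy s ⟨hs0.le, hs.2⟩ t ⟨ht0.le, ht.2⟩
        _ ≤ max Lm Lp * (dist x y + |s - t|) :=
            mul_le_mul_of_nonneg_right (le_max_right _ _) (by positivity)
  · intro x hx y hy s hs t ht
    -- positivity of iLm, iLp
    have hiLm0 : 0 ≤ iLm := by
      have := hiLm x hx x hx (-1) (by norm_num) 0 h00
      have hd := dist_nonneg (x := c x (-1)) (y := c x 0)
      have : (1:ℝ) ≤ iLm * dist (c x (-1)) (c x 0) := by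
        simpa using this
      nlinarith
    have hiLp0 : 0 ≤ iLp := by
      have := hiLp x hx x hx 1 (by norm_num) 0 h00'
      have hd := dist_nonneg (x := c x 1) (y := c x 0)
      have : (1:ℝ) ≤ iLp * dist (c x 1) (c x 0) := by
        simpa using this
      nlinarith
    have hM0 : 0 ≤ max iLm iLp := le_trans hiLm0 (le_max_left _ _)
    have key : ∀ x ∈ B, ∀ y ∈ B, ∀ s ∈ Set.Icc (-1:ℝ) 0, ∀ t ∈ Set.Icc (0:ℝ) 1,
        dist x y + |s - t| ≤ α * max iLm iLp * dist (c x s) (c y t) := by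
      intro x hx y hy s hs t ht
      obtain ⟨z, hz, hzd⟩ := hmid x hx y hy s hs t ht
      have hz0 : c z 0 = z := h0 z hz
      have h1 : dist x z + |s - 0| ≤ iLm * dist (c x s) (c z 0) :=
        hiLm x hx z hz s hs 0 h00
      have h2 : dist z y + |0 - t| ≤ iLp * dist (c z 0) (c y t) :=
        hiLp z hz y hy 0 h00' t ht
      rw [hz0] at h1 h2
      have htri := dist_triangle x z y
      have habs : |s - t| ≤ |s - 0| + |0 - t| := abs_sub_le s 0 t
      have hm1 : iLm * dist (c x s) z ≤ max iLm iLp * dist (c x s) z :=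
        mul_le_mul_of_nonneg_right (le_max_left _ _) dist_nonneg
      have hm2 : iLp * dist z (c y t) ≤ max iLm iLp * dist z (c y t) :=
        mul_le_mul_of_nonneg_right (le_max_right _ _) dist_nonneg
      have hfin : max iLm iLp * (dist (c x s) z + dist z (c y t)) ≤
          max iLm iLp * (α * dist (c x s) (c y t)) :=
        mul_le_mul_of_nonneg_left hzd hM0
      nlinarith
    rcases le_or_gt s 0 with hs0 | hs0 <;> rcases le_or_gt t 0 with ht0 | ht0
    · have h1 := hiLm x hx y hy s ⟨hs.1, hs0⟩ t ⟨ht.1, ht0⟩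
      have hd := dist_nonneg (x := c x s) (y := c y t)
      have h2 : iLm ≤ α * (iLm ⊔ iLp) := by nlinarith [le_max_left iLm iLp]
      have := mul_le_mul_of_nonneg_right h2 hd
      linarith
    · exact key x hx y hy s ⟨hs.1, hs0⟩ t ⟨ht0.le, ht.2⟩
    · rw [dist_comm x y, dist_comm (c x s) (c y t), abs_sub_comm s t]
      exact key y hy x hx t ⟨ht.1, ht0⟩ s ⟨hs0.le, hs.2⟩
    · have h1 := hiLp x hx y hy s ⟨hs0.le, hs.2⟩ t ⟨ht0.le, ht.2⟩
      have hd := dist_nonneg (x := c x s) (y := c y t)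
      have h2 : iLp ≤ α * (iLm ⊔ iLp) := by nlinarith [le_max_right iLm iLp]
      have := mul_le_mul_of_nonneg_right h2 hd
      linarith
end
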